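/- arXiv:1905.07914 — 2 statements merged into one kernel-verified Lean document; each statement's English description precedes it below -/
import Mathlib

section
/- Let n ≥ 3, let ξ₁ ≠ ξ₂ ∈ ℝⁿ, set R = |ξ₁−ξ₂|/2, and let C₀ ≥ 1. There exist constants c > 0 and ρ > 0, depending only on n, C₀ and |ξ₁−ξ₂|, with the following property: for every continuously differentiable function w on B(ξ₂,R)∖{ξ₂} satisfying C₀⁻¹ |x−ξ₂|^{2−n} ≤ w(x) ≤ C₀ |x−ξ₂|^{2−n} for all x ∈ B(ξ₂,R)∖{ξ₂}, there exists a point x* such that the closed ball of center x* and radius ρ is contained in B(ξ₂,R)∖{ξ₂} and c ≤ ∫_{B(x*,ρ)} |∇w(x)|² dx. -/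
open MeasureTheory Metric Set

noncomputable section

abbrev Euc (n : ℕ) := EuclideanSpace ℝ (Fin n)

set_option maxHeartbeats 2000000 in
/-- Lower bound for the local `L²`-norm of the gradient of a function with a
two-sided pole-type bound near `ξ₂`, on some ball well inside `B(ξ₂,|ξ₁−ξ₂|/2) ∖ {ξ₂}`. -/
theorem stmt5 (n : ℕ) (hn : 3 ≤ n) (C₀ : ℝ) (hC₀ : 1 ≤ C₀) (d : ℝ) (hd : 0 < d) :
    ∃ c > (0 : ℝ), ∃ ρ > (0 : ℝ),
      ∀ ξ₁ ξ₂ : Euc n, ξ₁ ≠ ξ₂ → dist ξ₁ ξ₂ = d →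
      ∀ w : Euc n → ℝ,
        ContDiffOn ℝ 1 w (ball ξ₂ (d / 2) \ {ξ₂}) →
        (∀ x ∈ ball ξ₂ (d / 2) \ {ξ₂},
            C₀⁻¹ * dist x ξ₂ ^ ((2:ℝ) - n) ≤ w x ∧
            w x ≤ C₀ * dist x ξ₂ ^ ((2:ℝ) - n)) →
        ∃ xstar : Euc n, closedBall xstar ρ ⊆ ball ξ₂ (d / 2) \ {ξ₂} ∧
          c ≤ ∫ x in ball xstar ρ, ‖gradient w x‖ ^ 2 := by
  obtain ⟨m, rfl⟩ : ∃ m, n = m + 1 := ⟨n - 1, by omega⟩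
  have hC₀0 : (0:ℝ) < C₀ := lt_of_lt_of_le one_pos hC₀
  set p : ℝ := (2:ℝ) - (m + 1 : ℕ) with hp_def
  have hp_neg : p ≤ -1 := by
    have : (3:ℝ) ≤ ((m+1 : ℕ) : ℝ) := by exact_mod_cast hn
    rw [hp_def]; linarith
  have hp_ne : p ≠ 0 := by intro h; rw [h] at hp_neg; norm_num at hp_neg
  set b : ℝ := d / 4 with hb_def
  have hb0 : 0 < b := by positivity
  set K : ℝ := 2 * C₀ ^ 2 with hK_def
  have hK1 : (1:ℝ) ≤ K := by nlinarith [sq_nonneg (C₀ - 1)]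
  have hK0 : (0:ℝ) < K := by linarith
  set a : ℝ := b * K ^ ((1:ℝ) / p) / 2 with ha_def
  have hKp0 : 0 < K ^ ((1:ℝ)/p) := Real.rpow_pos_of_pos hK0 _
  have hKp1 : K ^ ((1:ℝ)/p) ≤ 1 :=
    Real.rpow_le_one_of_one_le_of_nonpos hK1 (by
      apply div_nonpos_of_nonneg_of_nonpos <;> [norm_num; linarith])
  have ha0 : 0 < a := by rw [ha_def]; positivity
  have h2ab : 2 * a ≤ b := by
    rw [ha_def]; rw [mul_div_assoc']
    calc 2 * (b * K ^ ((1:ℝ)/p)) / 2 = b * K ^ ((1:ℝ)/p) := by ring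
    _ ≤ b * 1 := mul_le_mul_of_nonneg_left hKp1 hb0.le
    _ = b := mul_one b
  have hab : a < b := by linarith
  have hpow : (2*a) ^ p = K * b ^ p := by
    have h1 : 2*a = b * K ^ ((1:ℝ)/p) := by rw [ha_def]; ring
    rw [h1, Real.mul_rpow hb0.le hKp0.le, ← Real.rpow_mul hK0.le,
      one_div_mul_cancel hp_ne, Real.rpow_one]
    ring
  set δ : ℝ := C₀ * b ^ p with hδ_def
  have hbp0 : 0 < b ^ p := Real.rpow_pos_of_pos hb0 _
  have hδ0 : 0 < δ := by positivity
  set L : ℝ := b - a with hL_def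
  have hL0 : 0 < L := by rw [hL_def]; linarith
  set s : ℝ := a / Real.sqrt (m+1) with hs_def
  have hs0 : 0 < s := by
    rw [hs_def]; positivity
  have hs2 : s ^ 2 = a ^ 2 / (m+1) := by
    rw [hs_def, div_pow, Real.sq_sqrt (by positivity)]
  have hms_lt : (m:ℝ) * s^2 < a^2 := by
    have h1 : (m:ℝ) / (m+1) < 1 := by
      rw [div_lt_one (by positivity)]; linarith
    have h2 : (0:ℝ) < a^2 := by positivity
    have h3 : (m:ℝ) * s^2 = a^2 * ((m:ℝ)/(m+1)) := by rw [hs2]; ring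
    rw [h3]
    exact mul_lt_of_lt_one_right h2 h1
  set η : ℝ := δ^2 / L with hη_def
  have hη0 : 0 < η := by positivity
  set ρ : ℝ := Real.sqrt ((L/2)^2 + a^2) with hρ_def
  have hρ0 : 0 < ρ := by rw [hρ_def]; positivity
  have hρ_lt : ρ < (a+b)/2 := by
    rw [hρ_def]
    rw [show ((L/2)^2 + a^2) = ((b-a)/2)^2 + a^2 from by rw [hL_def]]
    rw [Real.sqrt_lt' (by linarith)]
    have expand : ((a+b)/2)^2 - (((b-a)/2)^2 + a^2) = a*(b-a) := by ring
    have hpos : 0 < a * (b - a) := mul_pos ha0 (by linarith)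
    linarith
  have hρ_le : ρ ≤ L/2 + a := by
    rw [hρ_def]
    calc Real.sqrt ((L/2)^2 + a^2) ≤ Real.sqrt ((L/2 + a)^2) := by
          apply Real.sqrt_le_sqrt
          have expand : (L/2 + a)^2 - ((L/2)^2 + a^2) = 2 * ((L/2)*a) := by ring
          have hpos : 0 < (L/2)*a := mul_pos (half_pos hL0) ha0
          linarith
    _ = L/2 + a := Real.sqrt_sq (by positivity)
  refine ⟨η * (2*s)^m, by positivity, ρ, hρ0, ?_⟩
  intro ξ₁ ξ₂ hne hdist w hw hbound
  set U : Set (Euc (m+1)) := ball ξ₂ (d/2) \ {ξ₂} with hU_def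
  have hUopen : IsOpen U := isOpen_ball.sdiff isClosed_singleton
  set Z : ℝ × (Fin m → ℝ) → Euc (m+1) := fun q =>
    (MeasurableEquiv.toLp 2 (Fin (m+1) → ℝ))
      ((MeasurableEquiv.piFinSuccAbove (fun _ : Fin (m+1) => ℝ) 0).symm q) with hZ_def
  have hZ0 : ∀ q : ℝ × (Fin m → ℝ), Z q 0 = q.1 := fun q => rfl
  have hZs : ∀ (q : ℝ × (Fin m → ℝ)) (j : Fin m), Z q j.succ = q.2 j := fun q j => rfl
  have hZnorm : ∀ q : ℝ × (Fin m → ℝ), ‖Z q‖^2 = q.1^2 + ∑ j, q.2 j^2 := by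
    intro q
    rw [EuclideanSpace.norm_eq, Real.sq_sqrt (by positivity), Fin.sum_univ_succ]
    simp [hZ0, hZs, Real.norm_eq_abs, sq_abs]
  have hdistZ : ∀ q : ℝ × (Fin m → ℝ), dist (ξ₂ + Z q) ξ₂ = ‖Z q‖ := by
    intro q; simp [dist_eq_norm]
  set Q : Set (Fin m → ℝ) := Set.pi univ (fun _ => Icc (-s) s) with hQ_def
  have hsumQ : ∀ y ∈ Q, ∑ j, y j ^ 2 < a ^ 2 := by
    intro y hy
    have h1 : ∀ j, y j ^ 2 ≤ s ^ 2 := by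
      intro j
      have := hy j (mem_univ j)
      rw [mem_Icc] at this
      exact sq_le_sq' this.1 this.2
    calc ∑ j, y j ^ 2 ≤ ∑ _j : Fin m, s ^ 2 := Finset.sum_le_sum fun j _ => h1 j
    _ = (m:ℝ) * s^2 := by rw [Finset.sum_const, Finset.card_univ, Fintype.card_fin,
          nsmul_eq_mul]
    _ < a ^ 2 := hms_lt
  have hnorm_ge : ∀ (t : ℝ) (y : Fin m → ℝ), |t| ≤ ‖Z (t, y)‖ := by
    intro t y
    have h1 : t^2 ≤ ‖Z (t,y)‖^2 := by
      rw [hZnorm]; have : 0 ≤ ∑ j, y j ^ 2 := by positivity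
      simp only []; linarith
    calc |t| = Real.sqrt (t^2) := (Real.sqrt_sq_eq_abs t).symm
    _ ≤ Real.sqrt (‖Z (t,y)‖^2) := Real.sqrt_le_sqrt h1
    _ = ‖Z (t,y)‖ := Real.sqrt_sq (norm_nonneg _)
  have hnorm_ub : ∀ (t : ℝ) (y : Fin m → ℝ), y ∈ Q → ‖Z (t, y)‖^2 < t^2 + a^2 := by
    intro t y hy
    rw [hZnorm]
    have := hsumQ y hy
    simp only []; linarith
  -- membership of segment points in U
  have hmemU : ∀ (t : ℝ) (y : Fin m → ℝ), t ∈ Icc a b → y ∈ Q → ξ₂ + Z (t, y) ∈ U := by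
    intro t y ht hy
    rw [mem_Icc] at ht
    constructor
    · rw [mem_ball, hdistZ]
      have h1 : ‖Z (t,y)‖^2 < t^2 + a^2 := hnorm_ub t y hy
      have h2 : t^2 + a^2 < (d/2)^2 := by
        have ht2 : t^2 ≤ b^2 := sq_le_sq' (by linarith [ht.1, ht.2]) ht.2
        have ha2 : a^2 ≤ b^2 := sq_le_sq' (by linarith) hab.le
        have hdd : (d/2)^2 - 2*b^2 = d^2/8 := by rw [hb_def]; ring
        have hd2 : 0 < d^2 := by positivity
        linarith
      have h3 : ‖Z (t,y)‖^2 < (d/2)^2 := by linarith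
      exact lt_of_pow_lt_pow_left₀ 2 (by positivity) h3
    · simp only [mem_singleton_iff]
      intro hcon
      have h4 : dist (ξ₂ + Z (t,y)) ξ₂ = 0 := by rw [hcon, dist_self]
      rw [hdistZ] at h4
      have h5 := hnorm_ge t y
      have : |t| ≤ 0 := by rw [← h4]; exact h5
      have ht1 : a ≤ t := ht.1
      have := abs_nonneg t
      have haa : a ≤ |t| := le_trans ht.1 (le_abs_self t)
      linarith
  set xstar : Euc (m+1) := ξ₂ + Z ((a+b)/2, fun _ => 0) with hxstar_def
  have hxstar_dist : dist xstar ξ₂ = (a+b)/2 := by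
    rw [hxstar_def, hdistZ]
    have h1 : ‖Z ((a+b)/2, fun _ => 0)‖^2 = ((a+b)/2)^2 := by
      rw [hZnorm]; simp
    have h2 : (0:ℝ) ≤ (a+b)/2 := by linarith
    calc ‖Z ((a+b)/2, fun _ => 0)‖ = Real.sqrt (‖Z ((a+b)/2, fun _ => 0)‖^2) :=
          (Real.sqrt_sq (norm_nonneg _)).symm
    _ = Real.sqrt (((a+b)/2)^2) := by rw [h1]
    _ = (a+b)/2 := Real.sqrt_sq h2
  have hsub1 : closedBall xstar ρ ⊆ U := by
    intro x hx
    rw [mem_closedBall] at hx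
    constructor
    · rw [mem_ball]
      calc dist x ξ₂ ≤ dist x xstar + dist xstar ξ₂ := dist_triangle _ _ _
      _ ≤ ρ + (a+b)/2 := by rw [hxstar_dist]; linarith
      _ ≤ (L/2 + a) + (a+b)/2 := by linarith
      _ = a + b := by rw [hL_def]; ring
      _ < d/2 := by rw [hb_def] at h2ab ⊢; linarith
    · simp only [mem_singleton_iff]
      intro hcon
      rw [hcon] at hx
      have := hxstar_dist
      rw [dist_comm] at hx
      linarith
  -- difference of Z values
  have hZsub : ∀ q q' : ℝ × (Fin m → ℝ), Z q - Z q' = Z (q.1 - q'.1, q.2 - q'.2) := by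
    intro q q'
    ext i
    refine Fin.cases ?_ ?_ i
    · simp [hZ0]
    · intro j; simp [hZs]
  have himg : ∀ (t : ℝ) (y : Fin m → ℝ), t ∈ Icc a b → y ∈ Q →
      ξ₂ + Z (t, y) ∈ ball xstar ρ := by
    intro t y ht hy
    rw [mem_Icc] at ht
    rw [mem_ball, hxstar_def]
    have h1 : dist (ξ₂ + Z (t,y)) (ξ₂ + Z ((a+b)/2, fun _ => 0)) =
        ‖Z (t - (a+b)/2, y - fun _ => 0)‖ := by
      rw [dist_add_left, dist_eq_norm, hZsub]
    rw [h1]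
    have h2 : ‖Z (t - (a+b)/2, y - fun _ => 0)‖^2 = (t - (a+b)/2)^2 + ∑ j, y j ^2 := by
      rw [hZnorm]; simp
    have h3 : (t - (a+b)/2)^2 ≤ ((b-a)/2)^2 := by
      apply sq_le_sq'
      · linarith
      · linarith
    have h4 : ‖Z (t - (a+b)/2, y - fun _ => 0)‖^2 < (L/2)^2 + a^2 := by
      rw [h2, hL_def]
      have := hsumQ y hy
      linarith
    have h5 : ρ^2 = (L/2)^2 + a^2 := by
      rw [hρ_def]; rw [Real.sq_sqrt (by positivity)]
    apply lt_of_pow_lt_pow_left₀ 2 hρ0.le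
    rw [h5]; exact h4
  -- differentiability and continuity facts
  have hwdiff : ∀ x ∈ U, DifferentiableAt ℝ w x := fun x hx =>
    (hw.differentiableOn one_ne_zero).differentiableAt (hUopen.mem_nhds hx)
  have hfc : ContinuousOn (fderiv ℝ w) U := hw.continuousOn_fderiv_of_isOpen hUopen le_rfl
  set g : Euc (m+1) → ℝ := fun x => ‖fderiv ℝ w x‖^2 with hg_def
  have hgc : ContinuousOn g U := (hfc.norm).pow 2
  have hg_nonneg : ∀ x, 0 ≤ g x := fun x => by rw [hg_def]; positivity
  -- direction vector
  set E : Euc (m+1) := Z (1, fun _ => 0) with hE_def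
  have hE1 : ‖E‖ = 1 := by
    have h1 : ‖E‖^2 = 1 := by rw [hE_def, hZnorm]; simp
    calc ‖E‖ = Real.sqrt (‖E‖^2) := (Real.sqrt_sq (norm_nonneg E)).symm
    _ = 1 := by rw [h1, Real.sqrt_one]
  have hZaff : ∀ (t : ℝ) (y : Fin m → ℝ), Z (t, y) = Z (0, y) + t • E := by
    intro t y
    ext i
    refine Fin.cases ?_ ?_ i
    · simp [hZ0, hE_def]
    · intro j; simp [hZs, hE_def]
  -- the slice estimate
  have hslice : ∀ y ∈ Q, ENNReal.ofReal η ≤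
      ∫⁻ t in Icc a b, ENNReal.ofReal (g (ξ₂ + Z (t, y))) ∂volume := by
    intro y hy
    set γ : ℝ → Euc (m+1) := fun t => ξ₂ + Z (t, y) with hγ_def
    have hγeq : γ = fun t => (ξ₂ + Z (0, y)) + t • E := by
      funext t; rw [hγ_def]; simp only []; rw [hZaff t y, add_assoc]
    have hγcont : Continuous γ := by
      rw [hγeq]
      exact continuous_const.add (continuous_id.smul continuous_const)
    have hγmem : ∀ t ∈ Icc a b, γ t ∈ U := fun t ht => hmemU t y ht hy
    have hγderiv : ∀ t : ℝ, HasDerivAt γ E t := by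
      intro t
      have h1 : HasDerivAt (fun τ : ℝ => τ • E) ((1:ℝ) • E) t := (hasDerivAt_id t).smul_const E
      have h2 := h1.const_add (ξ₂ + Z (0, y))
      rw [one_smul] at h2
      rw [hγeq]
      exact h2
    set G : ℝ → ℝ := fun t => ‖fderiv ℝ w (γ t)‖ with hG_def
    have hGcont : ContinuousOn G (Icc a b) :=
      (hfc.comp hγcont.continuousOn (fun t ht => hγmem t ht)).norm
    have hu'cont : ContinuousOn (fun t => fderiv ℝ w (γ t) E) (Icc a b) :=
      (hfc.comp hγcont.continuousOn (fun t ht => hγmem t ht)).clm_apply continuousOn_const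
    have hu'int : IntervalIntegrable (fun t => fderiv ℝ w (γ t) E) volume a b := by
      apply ContinuousOn.intervalIntegrable
      rwa [uIcc_of_le hab.le]
    have hGint : IntervalIntegrable G volume a b := by
      apply ContinuousOn.intervalIntegrable
      rwa [uIcc_of_le hab.le]
    have hG2int : IntervalIntegrable (fun t => G t ^ 2) volume a b := by
      apply ContinuousOn.intervalIntegrable
      rw [uIcc_of_le hab.le]
      exact hGcont.pow 2
    have hFTC : ∫ t in a..b, fderiv ℝ w (γ t) E = w (γ b) - w (γ a) := by
      apply intervalIntegral.integral_eq_sub_of_hasDerivAt (f := fun t => w (γ t))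
      · intro t ht
        rw [uIcc_of_le hab.le] at ht
        exact (hwdiff (γ t) (hγmem t ht)).hasFDerivAt.comp_hasDerivAt t (hγderiv t)
      · exact hu'int
    have hwa : 2*δ ≤ w (γ a) := by
      have hmem : γ a ∈ U := hγmem a ⟨le_refl a, hab.le⟩
      have hb1 := (hbound _ hmem).1
      have hdista : dist (γ a) ξ₂ = ‖Z (a, y)‖ := hdistZ _
      have hd1 : 0 < dist (γ a) ξ₂ := by
        rw [hdista]
        calc (0:ℝ) < a := ha0
        _ = |a| := (abs_of_pos ha0).symm
        _ ≤ ‖Z (a, y)‖ := hnorm_ge a y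
      have hd2 : dist (γ a) ξ₂ ≤ 2*a := by
        rw [hdista]
        have h1 : ‖Z (a, y)‖^2 < a^2 + a^2 := hnorm_ub a y hy
        have h2 : ‖Z (a, y)‖^2 < (2*a)^2 := by
          have : a^2 + a^2 ≤ (2*a)^2 := by
            have : (2*a)^2 - (a^2+a^2) = 2*a^2 := by ring
            have h3 : 0 ≤ a^2 := sq_nonneg a
            linarith
          linarith
        exact (lt_of_pow_lt_pow_left₀ 2 (by positivity) h2).le
      have hd3 : (2*a) ^ p ≤ dist (γ a) ξ₂ ^ p :=
        Real.rpow_le_rpow_of_nonpos hd1 hd2 (by linarith)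
      have hkey : C₀⁻¹ * ((2*a) ^ p) = 2*δ := by
        rw [hpow, hδ_def, hK_def]; field_simp
      calc 2*δ = C₀⁻¹ * ((2*a)^p) := hkey.symm
      _ ≤ C₀⁻¹ * dist (γ a) ξ₂ ^ p := mul_le_mul_of_nonneg_left hd3 (by positivity)
      _ ≤ w (γ a) := hb1
    have hwb : w (γ b) ≤ δ := by
      have hmem : γ b ∈ U := hγmem b ⟨hab.le, le_refl b⟩
      have hb2 := (hbound _ hmem).2
      have hdistb : dist (γ b) ξ₂ = ‖Z (b, y)‖ := hdistZ _
      have hge : b ≤ dist (γ b) ξ₂ := by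
        rw [hdistb]
        calc b = |b| := (abs_of_pos hb0).symm
        _ ≤ ‖Z (b, y)‖ := hnorm_ge b y
      have hd3 : dist (γ b) ξ₂ ^ p ≤ b ^ p :=
        Real.rpow_le_rpow_of_nonpos hb0 hge (by linarith)
      calc w (γ b) ≤ C₀ * dist (γ b) ξ₂ ^ p := hb2
      _ ≤ C₀ * b ^ p := mul_le_mul_of_nonneg_left hd3 hC₀0.le
      _ = δ := hδ_def.symm
    have hstep1 : δ ≤ ∫ t in a..b, G t := by
      have h2 : w (γ a) - w (γ b) = -(∫ t in a..b, fderiv ℝ w (γ t) E) := by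
        rw [hFTC]; ring
      have h3 : -(∫ t in a..b, fderiv ℝ w (γ t) E) ≤ |∫ t in a..b, fderiv ℝ w (γ t) E| :=
        neg_le_abs _
      have h4 : |∫ t in a..b, fderiv ℝ w (γ t) E| ≤ ∫ t in a..b, |fderiv ℝ w (γ t) E| :=
        intervalIntegral.abs_integral_le_integral_abs hab.le
      have h5 : ∫ t in a..b, |fderiv ℝ w (γ t) E| ≤ ∫ t in a..b, G t := by
        apply intervalIntegral.integral_mono_on hab.le hu'int.abs hGint
        intro t _
        calc |fderiv ℝ w (γ t) E| = ‖fderiv ℝ w (γ t) E‖ := (Real.norm_eq_abs _).symm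
        _ ≤ ‖fderiv ℝ w (γ t)‖ * ‖E‖ := ContinuousLinearMap.le_opNorm _ _
        _ = G t := by rw [hE1, mul_one]
      linarith
    have hkey2 : ∀ gg : ℝ, gg ≤ L/(2*δ)*gg^2 + δ/(2*L) := by
      intro gg
      rw [← sub_nonneg]
      have hh : L/(2*δ)*gg^2 + δ/(2*L) - gg = (L*gg - δ)^2 / (2*δ*L) := by
        field_simp; ring
      rw [hh]; positivity
    have hstep2 : η ≤ ∫ t in a..b, G t ^ 2 := by
      have h6 : ∫ t in a..b, G t ≤ ∫ t in a..b, (L/(2*δ)*G t^2 + δ/(2*L)) := by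
        apply intervalIntegral.integral_mono_on hab.le hGint
          ((hG2int.const_mul _).add intervalIntegrable_const)
        intro t _; exact hkey2 (G t)
      have h7 : ∫ t in a..b, (L/(2*δ)*G t^2 + δ/(2*L)) =
          L/(2*δ) * (∫ t in a..b, G t^2) + δ/(2*L)*(b-a) := by
        rw [intervalIntegral.integral_add (hG2int.const_mul _) intervalIntegrable_const,
          intervalIntegral.integral_const_mul, intervalIntegral.integral_const]
        simp only [smul_eq_mul]; ring
      have h9 : δ/(2*L)*(b-a) = δ/2 := by
        rw [← hL_def]; field_simp
      set X := ∫ t in a..b, G t ^ 2 with hX_def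
      have h8 : δ ≤ L/(2*δ)*X + δ/2 := by
        rw [← h9, ← h7]; linarith [hstep1, h6]
      have h10 : δ/2 ≤ L/(2*δ)*X := by linarith
      rw [div_mul_eq_mul_div] at h10
      have h11 := (div_le_div_iff₀ two_pos (by positivity : (0:ℝ) < 2*δ)).mp h10
      have e1 : δ * (2*δ) = 2*(δ^2) := by ring
      have e2 : L * X * 2 = 2*(X*L) := by ring
      rw [hη_def, div_le_iff₀ hL0]
      linarith
    have hIccInt : IntegrableOn (fun t => G t ^ 2) (Icc a b) volume := by
      exact (hGcont.pow 2).integrableOn_compact isCompact_Icc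
    calc ENNReal.ofReal η ≤ ENNReal.ofReal (∫ t in a..b, G t ^ 2) :=
          ENNReal.ofReal_le_ofReal hstep2
    _ = ENNReal.ofReal (∫ t in Ioc a b, G t ^ 2) := by
          rw [intervalIntegral.integral_of_le hab.le]
    _ = ∫⁻ t in Ioc a b, ENNReal.ofReal (G t ^ 2) ∂volume :=
          ofReal_integral_eq_lintegral_ofReal (hIccInt.mono_set Ioc_subset_Icc_self)
            (ae_of_all _ fun t => by positivity)
    _ ≤ ∫⁻ t in Icc a b, ENNReal.ofReal (G t ^ 2) ∂volume :=
          lintegral_mono_set Ioc_subset_Icc_self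
    _ = ∫⁻ t in Icc a b, ENNReal.ofReal (g (ξ₂ + Z (t, y))) ∂volume := rfl
  -- measure-theoretic assembly
  have hvolQ : volume Q = (ENNReal.ofReal (2*s))^m := by
    rw [hQ_def, volume_pi_pi]
    rw [show (fun _ : Fin m => volume (Icc (-s) s)) = fun _ : Fin m => ENNReal.ofReal (2*s) from
      funext fun _ => by rw [Real.volume_Icc]; congr 1; ring]
    rw [Finset.prod_const, Finset.card_univ, Fintype.card_fin]
  have mpZ : MeasurePreserving Z volume volume := by
    rw [hZ_def]
    exact (PiLp.volume_preserving_toLp (Fin (m+1))).comp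
      ((volume_preserving_piFinSuccAbove (fun _ : Fin (m+1) => ℝ) 0).symm _)
  set Ψ : ℝ × (Fin m → ℝ) → Euc (m+1) := fun q => ξ₂ + Z q with hΨ_def
  have mpΨ : MeasurePreserving Ψ volume volume :=
    (measurePreserving_add_left (volume : Measure (Euc (m+1))) ξ₂).comp mpZ
  have embΨ : MeasurableEmbedding Ψ := by
    have e1 : MeasurableEmbedding Z := by
      rw [hZ_def]
      exact ((MeasurableEquiv.toLp 2 (Fin (m+1) → ℝ)).measurableEmbedding).comp
        ((MeasurableEquiv.piFinSuccAbove (fun _ : Fin (m+1) => ℝ) 0).symm.measurableEmbedding)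
    exact ((Homeomorph.addLeft ξ₂).measurableEmbedding).comp e1
  have hgmeas : Measurable fun x : Euc (m+1) => ENNReal.ofReal (g x) := by
    apply Measurable.ennreal_ofReal
    rw [hg_def]
    exact (measurable_fderiv ℝ w).norm.pow_const 2
  have hchain : ENNReal.ofReal (η * (2*s)^m) ≤
      ∫⁻ x in ball xstar ρ, ENNReal.ofReal (g x) ∂volume := by
    calc ENNReal.ofReal (η * (2*s)^m)
        = ENNReal.ofReal η * volume Q := by
          rw [hvolQ, ENNReal.ofReal_mul hη0.le, ENNReal.ofReal_pow (by positivity)]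
      _ = ∫⁻ _y in Q, ENNReal.ofReal η ∂volume := (setLIntegral_const Q _).symm
      _ ≤ ∫⁻ y in Q, (∫⁻ t in Icc a b, ENNReal.ofReal (g (Ψ (t, y))) ∂volume) ∂volume := by
          apply setLIntegral_mono
          · exact Measurable.lintegral_prod_left (hgmeas.comp mpΨ.measurable)
          · intro y hy
            exact hslice y hy
      _ = ∫⁻ z in Icc a b ×ˢ Q, ENNReal.ofReal (g (Ψ z)) ∂(volume.prod volume) := by
          rw [← Measure.prod_restrict]
          exact (lintegral_prod_symm _ (hgmeas.comp mpΨ.measurable).aemeasurable).symm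
      _ = ∫⁻ z in Icc a b ×ˢ Q, ENNReal.ofReal (g (Ψ z)) ∂volume := by
          rw [← Measure.volume_eq_prod]
      _ = ∫⁻ x in Ψ '' (Icc a b ×ˢ Q), ENNReal.ofReal (g x) ∂volume :=
          mpΨ.setLIntegral_comp_emb embΨ (fun x => ENNReal.ofReal (g x)) (Icc a b ×ˢ Q)
      _ ≤ ∫⁻ x in ball xstar ρ, ENNReal.ofReal (g x) ∂volume := by
          apply lintegral_mono_set
          rintro x ⟨⟨t, y⟩, ⟨ht, hy⟩, rfl⟩
          exact himg t y ht hy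
  have hIball : IntegrableOn g (ball xstar ρ) volume :=
    ((hgc.mono hsub1).integrableOn_compact (isCompact_closedBall _ _)).mono_set
      ball_subset_closedBall
  have hofreal : ENNReal.ofReal (∫ x in ball xstar ρ, g x) =
      ∫⁻ x in ball xstar ρ, ENNReal.ofReal (g x) ∂volume :=
    ofReal_integral_eq_lintegral_ofReal hIball (ae_of_all _ fun x => hg_nonneg x)
  refine ⟨xstar, hsub1, ?_⟩
  have hgoal : η * (2*s)^m ≤ ∫ x in ball xstar ρ, g x := by
    rw [← ENNReal.ofReal_le_ofReal_iff
      (setIntegral_nonneg measurableSet_ball fun x _ => hg_nonneg x)]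
    rw [hofreal]
    exact hchain
  have hgrad : ∀ x : Euc (m+1), ‖gradient w x‖ ^ 2 = g x := by
    intro x
    rw [hg_def]
    have : ‖gradient w x‖ = ‖fderiv ℝ w x‖ := by
      rw [show gradient w x = (InnerProductSpace.toDual ℝ (Euc (m+1))).symm (fderiv ℝ w x)
        from rfl]
      exact LinearIsometryEquiv.norm_map _ _
    rw [this]
  simpa only [hgrad] using hgoal

end
end

section
/- Let n ≥ 2, ξ ∈ ℝⁿ, 0 < t < t̃, and let w be continuously differentiable on an open set containing the closed annulus {x ∈ ℝⁿ : t ≤ |x−ξ| ≤ t̃}. Then t^{n−1} ∫_{S^{n−1}} |w(ξ + t̃θ) − w(ξ + tθ)|² dσ(θ) ≤ t̃ ∫_{{x : t < |x−ξ| < t̃}} |∇w(x)|² dx, where dσ is the surface measure on the unit sphere S^{n−1} ⊂ ℝⁿ. -/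
open MeasureTheory Metric Set

noncomputable section

lemma cs_Ioc {t t' : ℝ} (htt : t ≤ t') {φ : ℝ → ℝ} (hφm : Measurable φ)
    {M : ℝ} (hM : ∀ s ∈ Ioc t t', |φ s| ≤ M) :
    (∫ s in Ioc t t', |φ s|) ^ 2 ≤ (t' - t) * ∫ s in Ioc t t', (φ s) ^ 2 := by
  set μ := (volume : Measure ℝ).restrict (Ioc t t')
  have hfin : IsFiniteMeasure μ := by
    constructor
    rw [Measure.restrict_apply_univ, Real.volume_Ioc]
    exact ENNReal.ofReal_lt_top
  have hpq : Real.HolderConjugate 2 2 := Real.holderConjugate_iff.mpr ⟨one_lt_two, by norm_num⟩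
  have hbd : ∀ᵐ s ∂μ, ‖|φ s|‖ ≤ M := by
    filter_upwards [ae_restrict_mem measurableSet_Ioc] with s hs
    simpa [abs_abs] using hM s hs
  have hφ2 : MemLp (fun s => |φ s|) (ENNReal.ofReal 2) μ :=
    MemLp.of_bound (hφm.abs.aestronglyMeasurable) M hbd
  have h1 : MemLp (fun _ : ℝ => (1 : ℝ)) (ENNReal.ofReal 2) μ := memLp_const 1
  have key := integral_mul_le_Lp_mul_Lq_of_nonneg (μ := μ) hpq
    (Filter.Eventually.of_forall fun s => abs_nonneg _)
    (Filter.Eventually.of_forall fun _ => zero_le_one) hφ2 h1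
  simp only [mul_one] at key
  have h2a : ∫ s, |φ s| ^ (2 : ℝ) ∂μ = ∫ s in Ioc t t', (φ s) ^ 2 := by
    refine integral_congr_ae (Filter.Eventually.of_forall fun s => ?_)
    show |φ s| ^ (2:ℝ) = φ s ^ 2
    rw [show ((2:ℝ)) = ((2:ℕ):ℝ) by norm_num, Real.rpow_natCast, sq_abs]
  have h2b : ∫ _ : ℝ, (1:ℝ) ^ (2:ℝ) ∂μ = t' - t := by
    simp [μ, Real.volume_Ioc, ENNReal.toReal_ofReal (sub_nonneg.2 htt), htt]
  rw [h2a, h2b] at key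
  have hA : (0:ℝ) ≤ ∫ s in Ioc t t', (φ s) ^ 2 :=
    integral_nonneg fun s => sq_nonneg _
  calc (∫ s in Ioc t t', |φ s|) ^ 2
      ≤ ((∫ s in Ioc t t', (φ s) ^ 2) ^ (1/(2:ℝ)) * (t' - t) ^ (1/(2:ℝ))) ^ 2 := by
        apply pow_le_pow_left₀ (integral_nonneg fun s => abs_nonneg _) key
    _ = (t' - t) * ∫ s in Ioc t t', (φ s) ^ 2 := by
        rw [mul_pow, ← Real.rpow_natCast (_ ^ (1/(2:ℝ))) 2, ← Real.rpow_natCast ((t'-t) ^ (1/(2:ℝ))) 2,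
          ← Real.rpow_mul hA, ← Real.rpow_mul (sub_nonneg.2 htt)]
        norm_num [mul_comm]

lemma pointwise_ineq (n : ℕ) (ξ : Euc n) (t t' : ℝ) (ht : 0 < t) (htt : t < t')
    (w : Euc n → ℝ) (U : Set (Euc n)) (hU : IsOpen U)
    (hsub : {x : Euc n | t ≤ dist x ξ ∧ dist x ξ ≤ t'} ⊆ U)
    (hw : ContDiffOn ℝ 1 w U) (θ : Euc n) (hθ : ‖θ‖ = 1) :
    t ^ (n-1) * |w (ξ + t' • θ) - w (ξ + t • θ)| ^ 2
      ≤ t' * ∫ r in Ioo t t', r ^ (n-1) * ‖gradient w (ξ + r • θ)‖ ^ 2 := by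
  set m := n - 1 with hm
  have hdist : ∀ s : ℝ, dist (ξ + s • θ) ξ = |s| := fun s => by
    rw [dist_eq_norm, add_sub_cancel_left, norm_smul, hθ, mul_one, Real.norm_eq_abs]
  have hmem : ∀ s ∈ Icc t t', ξ + s • θ ∈ U := fun s hs => by
    refine hsub ?_
    rw [mem_setOf_eq, hdist s, abs_of_pos (ht.trans_le hs.1)]
    exact hs
  set φ : ℝ → ℝ := fun s => fderiv ℝ w (ξ + s • θ) θ with hφ
  have hc : Continuous fun s : ℝ => ξ + s • θ := by continuity
  have hder : ∀ s ∈ Icc t t', HasDerivAt (fun r => w (ξ + r • θ)) (φ s) s := by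
    intro s hs
    have hdiff : DifferentiableAt ℝ w (ξ + s • θ) :=
      (hw.differentiableOn one_ne_zero).differentiableAt (hU.mem_nhds (hmem s hs))
    have := hdiff.hasFDerivAt.comp_hasDerivAt s (((hasDerivAt_id s).smul_const θ).const_add ξ)
    rw [one_smul] at this
    exact this
  have hcont_fd : ContinuousOn (fderiv ℝ w) U := hw.continuousOn_fderiv_of_isOpen hU le_rfl
  have hφcont : ContinuousOn φ (Icc t t') :=
    (hcont_fd.comp hc.continuousOn hmem).clm_apply continuousOn_const
  have hFTC : w (ξ + t' • θ) - w (ξ + t • θ) = ∫ s in t..t', φ s :=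
    (intervalIntegral.integral_eq_sub_of_hasDerivAt
      (fun s hs => hder s (by rwa [uIcc_of_le htt.le] at hs))
      ((hφcont.mono (by rw [uIcc_of_le htt.le])).intervalIntegrable)).symm
  have hφm : Measurable φ := (measurable_fderiv_apply_const ℝ w θ).comp hc.measurable
  obtain ⟨M, hM⟩ := isCompact_Icc.exists_bound_of_continuousOn hφcont
  have key := cs_Ioc htt.le hφm (M := M)
    (fun s hs => hM s (Ioc_subset_Icc_self hs))
  have h1 : |w (ξ + t' • θ) - w (ξ + t • θ)| ≤ ∫ s in Ioc t t', |φ s| := by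
    rw [hFTC, ← intervalIntegral.integral_of_le htt.le]
    exact intervalIntegral.abs_integral_le_integral_abs htt.le
  have h2 : |w (ξ + t' • θ) - w (ξ + t • θ)| ^ 2 ≤ (t' - t) * ∫ s in Ioc t t', φ s ^ 2 :=
    le_trans (pow_le_pow_left₀ (abs_nonneg _) h1 2) key
  have hgradcont : ContinuousOn (gradient w) U :=
    (InnerProductSpace.toDual ℝ (Euc n)).symm.continuous.comp_continuousOn hcont_fd
  have hGcont : ContinuousOn (fun s : ℝ => s ^ m * ‖gradient w (ξ + s • θ)‖ ^ 2) (Icc t t') :=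
    (continuous_pow m).continuousOn.mul
      (((hgradcont.comp hc.continuousOn hmem).norm).pow 2)
  have hφle : ∀ s ∈ Icc t t', |φ s| ≤ ‖gradient w (ξ + s • θ)‖ := by
    intro s hs
    have hop := (fderiv ℝ w (ξ + s • θ)).le_opNorm θ
    rw [hθ, mul_one] at hop
    calc |φ s| = ‖fderiv ℝ w (ξ + s • θ) θ‖ := (Real.norm_eq_abs _).symm
      _ ≤ ‖fderiv ℝ w (ξ + s • θ)‖ := hop
      _ = ‖gradient w (ξ + s • θ)‖ := ((InnerProductSpace.toDual ℝ
            (Euc n)).symm.norm_map (fderiv ℝ w (ξ + s • θ))).symm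
  have hRnonneg : (0:ℝ) ≤ ∫ s in Ioc t t', s ^ m * ‖gradient w (ξ + s • θ)‖ ^ 2 :=
    setIntegral_nonneg measurableSet_Ioc fun s hs =>
      mul_nonneg (pow_nonneg (ht.trans hs.1).le m) (pow_nonneg (norm_nonneg _) 2)
  calc t ^ m * |w (ξ + t' • θ) - w (ξ + t • θ)| ^ 2
      ≤ t ^ m * ((t' - t) * ∫ s in Ioc t t', φ s ^ 2) :=
        mul_le_mul_of_nonneg_left h2 (pow_nonneg ht.le m)
    _ = (t' - t) * ∫ s in Ioc t t', t ^ m * φ s ^ 2 := by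
        rw [integral_const_mul]; ring
    _ ≤ (t' - t) * ∫ s in Ioc t t', s ^ m * ‖gradient w (ξ + s • θ)‖ ^ 2 := by
        refine mul_le_mul_of_nonneg_left ?_ (sub_nonneg.2 htt.le)
        refine setIntegral_mono_on ?_ ?_ measurableSet_Ioc ?_
        · exact (Integrable.const_mul (((hφcont.pow 2).integrableOn_compact
            isCompact_Icc).mono_set Ioc_subset_Icc_self) _)
        · exact (hGcont.integrableOn_compact isCompact_Icc).mono_set Ioc_subset_Icc_self
        · intro s hs
          have hs' : s ∈ Icc t t' := Ioc_subset_Icc_self hs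
          have h4 : φ s ^ 2 ≤ ‖gradient w (ξ + s • θ)‖ ^ 2 := by
            rw [← sq_abs]
            exact pow_le_pow_left₀ (abs_nonneg _) (hφle s hs') 2
          have h5 : t ^ m ≤ s ^ m := pow_le_pow_left₀ ht.le hs'.1 m
          exact mul_le_mul h5 h4 (sq_nonneg _) (pow_nonneg (ht.trans hs.1).le m)
    _ ≤ t' * ∫ s in Ioc t t', s ^ m * ‖gradient w (ξ + s • θ)‖ ^ 2 :=
        mul_le_mul_of_nonneg_right (by linarith) hRnonneg
    _ = t' * ∫ s in Ioo t t', s ^ m * ‖gradient w (ξ + s • θ)‖ ^ 2 := by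
        rw [integral_Ioc_eq_integral_Ioo]


lemma polar_general (n : ℕ) (hn : 1 ≤ n) (G : Euc n → ℝ) (hG : Measurable G)
    (t t' : ℝ) (ht : 0 < t) (htt : t < t') (M : ℝ)
    (hM : ∀ y : Euc n, t ≤ ‖y‖ → ‖y‖ ≤ t' → |G y| ≤ M) :
    Integrable (fun θ : sphere (0 : Euc n) 1 =>
        ∫ r in Ioo t t', r ^ (n-1) * G (r • (θ : Euc n)))
        (volume : Measure (Euc n)).toSphere ∧
    (∫ θ : sphere (0 : Euc n) 1,
        (∫ r in Ioo t t', r ^ (n-1) * G (r • (θ : Euc n)))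
          ∂(volume : Measure (Euc n)).toSphere)
      = ∫ y in {y : Euc n | t < ‖y‖ ∧ ‖y‖ < t'}, G y := by
  haveI : Nonempty (Fin n) := ⟨⟨0, hn⟩⟩
  haveI : Nontrivial (Euc n) := inferInstance
  set m := n - 1 with hm
  have hfinrank : Module.finrank ℝ (Euc n) = n := finrank_euclideanSpace_fin
  set σm := (volume : Measure (Euc n)).toSphere with hσm
  set ν := Measure.volumeIoiPow m with hν
  set A₀ : Set (Euc n) := {y | t < ‖y‖ ∧ ‖y‖ < t'} with hA₀
  have hA₀m : MeasurableSet A₀ := by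
    have : A₀ = (fun y : Euc n => ‖y‖) ⁻¹' Ioo t t' := rfl
    rw [this]
    exact measurableSet_Ioo.preimage continuous_norm.measurable
  set f : Euc n → ℝ := A₀.indicator G with hf
  have hfm : Measurable f := hG.indicator hA₀m
  set T := homeomorphUnitSphereProd (Euc n) with hT
  set g : sphere (0 : Euc n) 1 × Ioi (0:ℝ) → ℝ := fun p => f ((p.2 : ℝ) • (p.1 : Euc n)) with hg
  have hsmul_cont : Continuous fun p : sphere (0 : Euc n) 1 × Ioi (0:ℝ) =>
      (p.2 : ℝ) • (p.1 : Euc n) :=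
    (continuous_subtype_val.comp continuous_snd).smul (continuous_subtype_val.comp continuous_fst)
  have hgm : Measurable g := hfm.comp hsmul_cont.measurable
  -- unit norm fact
  have hnorm : ∀ (θ : sphere (0 : Euc n) 1) (r : ℝ), 0 ≤ r → ‖r • (θ : Euc n)‖ = r := by
    intro θ r hr
    rw [norm_smul, mem_sphere_zero_iff_norm.1 θ.2, mul_one, Real.norm_eq_abs, abs_of_nonneg hr]
  -- step 1-2 : change of variables
  have step12 : ∫ y, f y = ∫ p, g p ∂(σm.prod ν) := by
    have e1 : ∫ x : ({0}ᶜ : Set (Euc n)), f x ∂((volume : Measure (Euc n)).comap Subtype.val)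
        = ∫ y, f y := by
      rw [integral_subtype_comap (measurableSet_singleton 0).compl f,
        restrict_compl_singleton]
    have e2 := ((volume : Measure (Euc n)).measurePreserving_homeomorphUnitSphereProd).integral_comp
      T.measurableEmbedding g
    rw [hfinrank] at e2
    have e3 : ∀ x : ({0}ᶜ : Set (Euc n)), g (T x) = f x := by
      intro x
      have hx : (x : Euc n) ≠ 0 := x.2
      simp only [hg, hT, homeomorphUnitSphereProd_apply_snd_coe,
        homeomorphUnitSphereProd_apply_fst_coe]
      rw [smul_inv_smul₀ (norm_ne_zero_iff.2 hx)]
    rw [← e1, ← e2]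
    exact integral_congr_ae (Filter.Eventually.of_forall fun x => (e3 x).symm)
  -- the support set and its finite measure
  set K : Set (sphere (0 : Euc n) 1 × Ioi (0:ℝ)) :=
    univ ×ˢ (Subtype.val ⁻¹' Ioo t t') with hK
  have hKm : MeasurableSet K :=
    MeasurableSet.univ.prod (measurableSet_Ioo.preimage measurable_subtype_coe)
  have hKfin : (σm.prod ν) K < ⊤ := by
    rw [hK, Measure.prod_prod]
    refine ENNReal.mul_lt_top (measure_lt_top σm univ) ?_
    have hsub2 : (Subtype.val ⁻¹' Ioo t t' : Set (Ioi (0:ℝ))) ⊆ Iio ⟨t', ht.trans htt⟩ :=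
      fun r hr => mem_Iio.2 (Subtype.coe_lt_coe.1 hr.2)
    refine (measure_mono hsub2).trans_lt ?_
    rw [hν, Measure.volumeIoiPow_apply_Iio]
    exact ENNReal.ofReal_lt_top
  have hgint : Integrable g (σm.prod ν) := by
    refine Integrable.mono' (g := K.indicator fun _ => max M 0)
      ((integrable_indicator_iff hKm).2 (integrableOn_const hKfin.ne))
      hgm.aestronglyMeasurable ?_
    refine Filter.Eventually.of_forall fun p => ?_
    by_cases hp : (p.2 : ℝ) ∈ Ioo t t'
    · rw [indicator_of_mem (show p ∈ K from ⟨trivial, hp⟩)]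
      have hn : ‖(p.2 : ℝ) • (p.1 : Euc n)‖ = (p.2 : ℝ) := hnorm p.1 p.2 p.2.2.le
      rw [Real.norm_eq_abs]
      show |f _| ≤ max M 0
      rw [hf, indicator_of_mem (show ((p.2:ℝ) • (p.1:Euc n)) ∈ A₀ from by
        rw [hA₀, mem_setOf_eq, hn]; exact hp)]
      exact (hM _ (by rw [hn]; exact hp.1.le) (by rw [hn]; exact hp.2.le)).trans (le_max_left _ _)
    · rw [indicator_of_notMem (fun h => hp h.2)]
      have hz : f ((p.2:ℝ) • (p.1:Euc n)) = 0 := by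
        rw [hf, indicator_of_notMem]
        rw [hA₀, mem_setOf_eq, hnorm p.1 p.2 p.2.2.le]
        exact hp
      show ‖f _‖ ≤ 0
      rw [hz, norm_zero]
  -- the marginal computation
  have marginal : ∀ θ : sphere (0 : Euc n) 1,
      (∫ r : Ioi (0:ℝ), g (θ, r) ∂ν) = ∫ r in Ioo t t', r ^ m * G (r • (θ : Euc n)) := by
    intro θ
    have dmeas : Measurable fun r : Ioi (0:ℝ) => Real.toNNReal (r.1 ^ m) :=
      (measurable_subtype_coe.pow_const m).real_toNNReal
    calc ∫ r : Ioi (0:ℝ), g (θ, r) ∂ν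
        = ∫ r : Ioi (0:ℝ), Real.toNNReal (r.1 ^ m) • f (r.1 • (θ : Euc n))
            ∂(Measure.comap Subtype.val volume) := by
          rw [hν]
          simp only [Measure.volumeIoiPow, ENNReal.ofReal]
          rw [integral_withDensity_eq_integral_smul dmeas
            (fun r : Ioi (0:ℝ) => f (r.1 • (θ : Euc n)))]
      _ = ∫ r in Ioi (0:ℝ), Real.toNNReal (r ^ m) • f (r • (θ : Euc n)) :=
          integral_subtype_comap measurableSet_Ioi
            (fun a : ℝ => Real.toNNReal (a ^ m) • f (a • (θ : Euc n)))
      _ = ∫ r in Ioi (0:ℝ), (Ioo t t').indicator (fun r => r ^ m * G (r • (θ : Euc n))) r := by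
          refine setIntegral_congr_fun measurableSet_Ioi fun r hr => ?_
          have hrpos : (0:ℝ) < r := hr
          by_cases hro : r ∈ Ioo t t'
          · rw [indicator_of_mem hro, NNReal.smul_def,
              Real.coe_toNNReal _ (pow_nonneg hrpos.le m), smul_eq_mul, hf,
              indicator_of_mem (show r • (θ : Euc n) ∈ A₀ from by
                rw [hA₀, mem_setOf_eq, hnorm θ r hrpos.le]; exact hro)]
          · rw [indicator_of_notMem hro, hf, indicator_of_notMem, smul_zero]
            rw [hA₀, mem_setOf_eq, hnorm θ r hrpos.le]
            exact hro
      _ = ∫ r in Ioo t t', r ^ m * G (r • (θ : Euc n)) := by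
          rw [setIntegral_indicator measurableSet_Ioo,
            inter_eq_self_of_subset_right
              (show Ioo t t' ⊆ Ioi 0 from fun r hr => ht.trans hr.1)]
  constructor
  · exact (hgint.integral_prod_left).congr
      (Filter.Eventually.of_forall fun θ => marginal θ)
  · calc ∫ θ : sphere (0 : Euc n) 1, (∫ r in Ioo t t', r ^ m * G (r • (θ : Euc n))) ∂σm
        = ∫ θ : sphere (0 : Euc n) 1, (∫ r : Ioi (0:ℝ), g (θ, r) ∂ν) ∂σm :=
          integral_congr_ae (Filter.Eventually.of_forall fun θ => (marginal θ).symm)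
      _ = ∫ p, g p ∂(σm.prod ν) := (integral_prod g hgint).symm
      _ = ∫ y, f y := step12.symm
      _ = ∫ y in A₀, G y := integral_indicator hA₀m

/-- Annulus inequality: comparing boundary values on two spheres with the
`L²`-norm of the gradient on the annulus between them. Here the unit sphere
carries its surface measure `volume.toSphere`. -/
theorem stmt6 (n : ℕ) (hn : 2 ≤ n) (ξ : Euc n) (t t' : ℝ) (ht : 0 < t) (htt : t < t')
    (w : Euc n → ℝ) (U : Set (Euc n)) (hU : IsOpen U)
    (hsub : {x : Euc n | t ≤ dist x ξ ∧ dist x ξ ≤ t'} ⊆ U)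
    (hw : ContDiffOn ℝ 1 w U) :
    t ^ (n - 1) *
        ∫ θ : Metric.sphere (0 : Euc n) 1,
          |w (ξ + t' • (θ : Euc n)) - w (ξ + t • (θ : Euc n))| ^ 2
            ∂((volume : Measure (Euc n)).toSphere)
      ≤ t' * ∫ x in {x : Euc n | t < dist x ξ ∧ dist x ξ < t'}, ‖gradient w x‖ ^ 2 := by
  set m := n - 1 with hm
  set F : Euc n → ℝ := fun x => ‖gradient w x‖ ^ 2 with hF
  set G : Euc n → ℝ := fun y => F (ξ + y) with hG
  have hdist : ∀ y : Euc n, dist (ξ + y) ξ = ‖y‖ := fun y => by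
    rw [dist_eq_norm, add_sub_cancel_left]
  have hFm : Measurable F :=
    ((((InnerProductSpace.toDual ℝ (Euc n)).symm.continuous.measurable).comp
      (measurable_fderiv ℝ w)).norm).pow_const 2
  have hGm : Measurable G := hFm.comp (measurable_const_add ξ)
  -- bound on the closed annulus
  set C : Set (Euc n) := {x | t ≤ dist x ξ ∧ dist x ξ ≤ t'} with hC
  have hCcomp : IsCompact C := by
    have : C = closedBall ξ t' ∩ (ball ξ t)ᶜ := by
      ext x
      simp only [hC, mem_setOf_eq, mem_inter_iff, mem_closedBall, mem_compl_iff, mem_ball, not_lt]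
      tauto
    rw [this]
    exact (isCompact_closedBall ξ t').inter_right isOpen_ball.isClosed_compl
  have hcont_fd : ContinuousOn (fderiv ℝ w) U := hw.continuousOn_fderiv_of_isOpen hU le_rfl
  have hgradcont : ContinuousOn (gradient w) U :=
    (InnerProductSpace.toDual ℝ (Euc n)).symm.continuous.comp_continuousOn hcont_fd
  have hFcont : ContinuousOn F C := ((hgradcont.norm).pow 2).mono hsub
  obtain ⟨M, hMC⟩ := hCcomp.exists_bound_of_continuousOn hFcont
  have hMbound : ∀ y : Euc n, t ≤ ‖y‖ → ‖y‖ ≤ t' → |G y| ≤ M := by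
    intro y h1 h2
    have hmem : ξ + y ∈ C := by rw [hC, mem_setOf_eq, hdist y]; exact ⟨h1, h2⟩
    simpa using hMC _ hmem
  obtain ⟨hint, heq⟩ := polar_general n (le_trans one_le_two hn) G hGm t t' ht htt M hMbound
  -- translation step
  set A : Set (Euc n) := {x | t < dist x ξ ∧ dist x ξ < t'} with hA
  have hAm : MeasurableSet A := by
    have : A = (fun x : Euc n => dist x ξ) ⁻¹' Ioo t t' := rfl
    rw [this]
    exact measurableSet_Ioo.preimage (continuous_id.dist continuous_const).measurable
  have htrans : (∫ y in {y : Euc n | t < ‖y‖ ∧ ‖y‖ < t'}, G y) = ∫ x in A, F x := by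
    have e1 : ∀ y : Euc n, A.indicator F (ξ + y)
        = ({y : Euc n | t < ‖y‖ ∧ ‖y‖ < t'}).indicator G y := by
      intro y
      by_cases hy : t < ‖y‖ ∧ ‖y‖ < t'
      · rw [indicator_of_mem (show ξ + y ∈ A from by rw [hA, mem_setOf_eq, hdist y]; exact hy)]
        exact (indicator_of_mem (show y ∈ {y : Euc n | t < ‖y‖ ∧ ‖y‖ < t'} from hy) G).symm
      · rw [indicator_of_notMem
          (show ξ + y ∉ A from by rw [hA, mem_setOf_eq, hdist y]; exact hy)]
        exact (indicator_of_notMem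
          (show y ∉ {y : Euc n | t < ‖y‖ ∧ ‖y‖ < t'} from hy) G).symm
    calc ∫ y in {y : Euc n | t < ‖y‖ ∧ ‖y‖ < t'}, G y
        = ∫ y, ({y : Euc n | t < ‖y‖ ∧ ‖y‖ < t'}).indicator G y := by
          rw [integral_indicator]
          have : {y : Euc n | t < ‖y‖ ∧ ‖y‖ < t'} = (fun y : Euc n => ‖y‖) ⁻¹' Ioo t t' := rfl
          rw [this]
          exact measurableSet_Ioo.preimage continuous_norm.measurable
      _ = ∫ y, A.indicator F (ξ + y) := by
          exact integral_congr_ae (Filter.Eventually.of_forall fun y => (e1 y).symm)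
      _ = ∫ x, A.indicator F x := integral_add_left_eq_self (A.indicator F) ξ
      _ = ∫ x in A, F x := integral_indicator hAm
  -- main chain
  calc t ^ m * ∫ θ : Metric.sphere (0 : Euc n) 1,
        |w (ξ + t' • (θ : Euc n)) - w (ξ + t • (θ : Euc n))| ^ 2
          ∂((volume : Measure (Euc n)).toSphere)
      = ∫ θ : Metric.sphere (0 : Euc n) 1,
          t ^ m * |w (ξ + t' • (θ : Euc n)) - w (ξ + t • (θ : Euc n))| ^ 2
            ∂((volume : Measure (Euc n)).toSphere) := (integral_const_mul _ _).symm
    _ ≤ ∫ θ : Metric.sphere (0 : Euc n) 1,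
          t' * (∫ r in Ioo t t', r ^ m * G (r • (θ : Euc n)))
            ∂((volume : Measure (Euc n)).toSphere) := by
        refine integral_mono_of_nonneg
          (Filter.Eventually.of_forall fun θ =>
            mul_nonneg (pow_nonneg ht.le m) (sq_nonneg _))
          (hint.const_mul t')
          (Filter.Eventually.of_forall fun θ => ?_)
        exact pointwise_ineq n ξ t t' ht htt w U hU hsub hw (θ : Euc n)
          (mem_sphere_zero_iff_norm.1 θ.2)
    _ = t' * ∫ θ : Metric.sphere (0 : Euc n) 1,
          (∫ r in Ioo t t', r ^ m * G (r • (θ : Euc n)))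
            ∂((volume : Measure (Euc n)).toSphere) := integral_const_mul _ _
    _ = t' * ∫ y in {y : Euc n | t < ‖y‖ ∧ ‖y‖ < t'}, G y := by rw [heq]
    _ = t' * ∫ x in A, F x := by rw [htrans]

end
end
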